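/- Let 2 ≤ j < k ≤ n, and let S be a set of k-element subsets of {1,…,n} such that any two distinct members of S intersect in at most r elements. Let Ā be the submatrix of R^{j,k} consisting of the columns indexed by S, let T ⊆ S be nonempty and T^c = S \ T. If r ≤ (1/(|T|·(1+√|T|)))^{1/j} · k, then Ā_T^*Ā_T is invertible and the irrepresentable condition holds: ‖Ā_{T^c}^* Ā_T (Ā_T^*Ā_T)^{−1}‖_∞ < 1. -/

import Mathlib

open scoped Classical
open Finset Matrix

noncomputable section

/-- The normalized Radon matrix `R^{j,k}`: rows are indexed by `j`-element subsets of
`{1,…,n}`, columns by `k`-element subsets, with entry `1/√(C(k,j))` if the row set is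
contained in the column set and `0` otherwise. -/
def radon (n j k : ℕ) :
    Matrix {σ : Finset (Fin n) // σ.card = j} {τ : Finset (Fin n) // τ.card = k} ℝ :=
  fun σ τ => if σ.1 ⊆ τ.1 then 1 / Real.sqrt (k.choose j) else 0

/-- The submatrix of `A` consisting of the columns indexed by `T`. -/
def colSub {m p R : Type*} (A : Matrix m p R) (T : Finset p) :
    Matrix m {x // x ∈ T} R :=
  fun i t => A i t.1

/-- Maximum absolute row sum of a matrix, `‖M‖_∞`. -/
def matInfNorm {m p : Type*} [Fintype p] (M : Matrix m p ℝ) : ℝ :=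
  ⨆ i, ∑ j, |M i j|

/-- Maximum absolute column sum of a matrix, `‖M‖₁`. -/
def matOneNorm {m p : Type*} [Fintype m] (M : Matrix m p ℝ) : ℝ :=
  ⨆ j, ∑ i, |M i j|

/-- `ℓ¹` norm of a vector. -/
def vecOneNorm {m : Type*} [Fintype m] (u : m → ℝ) : ℝ := ∑ i, |u i|

/-- `ℓ^∞` norm of a vector. -/
def vecInfNorm {m : Type*} (u : m → ℝ) : ℝ := ⨆ i, |u i|

/-! ### Auxiliary lemmas -/

lemma count_sub (n j : ℕ) (s : Finset (Fin n)) :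
    ∑ σ : {σ : Finset (Fin n) // σ.card = j}, (if σ.1 ⊆ s then (1:ℝ) else 0)
      = (s.card.choose j : ℝ) := by
  rw [Finset.sum_boole]
  norm_num
  rw [← Finset.card_powersetCard]
  apply Finset.card_bij (fun (σ : {σ : Finset (Fin n) // σ.card = j}) _ => σ.1)
  · intro a ha
    simp only [Finset.mem_filter, Finset.mem_univ, true_and] at ha
    simp [Finset.mem_powersetCard, ha, a.2]
  · intro a _ b _ h
    exact Subtype.ext h
  · intro τ hτ
    rw [Finset.mem_powersetCard] at hτ
    exact ⟨⟨τ, hτ.2⟩, by simp [hτ.1], rfl⟩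

lemma gram_entry (n j k : ℕ) (hjk : j ≤ k)
    (U V : Finset {τ : Finset (Fin n) // τ.card = k}) (a : {x // x ∈ U}) (b : {x // x ∈ V}) :
    ((colSub (radon n j k) U)ᵀ * colSub (radon n j k) V) a b
      = ((a.1.1 ∩ b.1.1).card.choose j : ℝ) / (k.choose j : ℝ) := by
  have hC : (0:ℝ) < (k.choose j : ℝ) := by exact_mod_cast Nat.choose_pos hjk
  have key : ∀ σ : {σ : Finset (Fin n) // σ.card = j},
      radon n j k σ a.1 * radon n j k σ b.1
        = (if σ.1 ⊆ a.1.1 ∩ b.1.1 then (1:ℝ) else 0) * (1 / (k.choose j : ℝ)) := by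
    intro σ
    simp only [radon, Finset.subset_inter_iff]
    by_cases h1 : σ.1 ⊆ a.1.1 <;> by_cases h2 : σ.1 ⊆ b.1.1 <;>
      simp [h1, h2, ← mul_inv, Real.mul_self_sqrt hC.le]
  rw [Matrix.mul_apply]
  simp only [Matrix.transpose_apply, colSub]
  rw [Finset.sum_congr rfl (fun σ _ => key σ), ← Finset.sum_mul, count_sub]
  ring

lemma desc_ineq (r k : ℕ) (h : r ≤ k) : ∀ j : ℕ,
    r.descFactorial j * k ^ j ≤ k.descFactorial j * r ^ j := by
  intro j
  induction j with
  | zero => simp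
  | succ j ih =>
    rw [Nat.descFactorial_succ, Nat.descFactorial_succ, pow_succ, pow_succ]
    have h1 : (r - j) * k ≤ (k - j) * r := by
      have h2 : j * r ≤ j * k := Nat.mul_le_mul_left j h
      rw [Nat.sub_mul, Nat.sub_mul]
      have h3 : r * k = k * r := Nat.mul_comm r k
      omega
    calc (r - j) * r.descFactorial j * (k ^ j * k)
        = ((r - j) * k) * (r.descFactorial j * k ^ j) := by ring
      _ ≤ ((k - j) * r) * (k.descFactorial j * r ^ j) := Nat.mul_le_mul h1 ih
      _ = (k - j) * k.descFactorial j * (r ^ j * r) := by ring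

lemma choose_ratio (r k j : ℕ) (h : r ≤ k) (hk : 0 < k) (hjk : j ≤ k) :
    ((r.choose j : ℝ)) / (k.choose j : ℝ) ≤ ((r : ℝ) / k) ^ j := by
  have hd := desc_ineq r k h j
  have hch : r.choose j * k ^ j ≤ k.choose j * r ^ j := by
    rw [Nat.descFactorial_eq_factorial_mul_choose, Nat.descFactorial_eq_factorial_mul_choose] at hd
    have hf : 0 < j.factorial := Nat.factorial_pos j
    rw [mul_assoc, mul_assoc] at hd
    exact Nat.le_of_mul_le_mul_left hd hf
  have hC : (0:ℝ) < (k.choose j : ℝ) := by exact_mod_cast Nat.choose_pos hjk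
  have hkR : (0:ℝ) < (k:ℝ) := by exact_mod_cast hk
  rw [div_pow, div_le_div_iff₀ hC (by positivity)]
  calc (r.choose j : ℝ) * (k:ℝ)^j = ((r.choose j * k ^ j : ℕ) : ℝ) := by push_cast; ring
    _ ≤ ((k.choose j * r ^ j : ℕ) : ℝ) := by exact_mod_cast hch
    _ = (r:ℝ)^j * (k.choose j) := by push_cast; ring

attribute [local instance] Matrix.linftyOpNormedAddCommGroup Matrix.linftyOpNormedRing
  Matrix.linftyOpNormedAlgebra

lemma rowsum_eq {m p : Type*} [Fintype m] [Fintype p] (M : Matrix m p ℝ) (i : m) :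
    ((∑ j, ‖M i j‖₊ : NNReal) : ℝ) = ∑ j, |M i j| := by
  push_cast
  simp [Real.norm_eq_abs]

lemma norm_le_of_rowsum {m p : Type*} [Fintype m] [Fintype p] (M : Matrix m p ℝ) {c : ℝ}
    (hc : 0 ≤ c) (h : ∀ i, ∑ j, |M i j| ≤ c) : ‖M‖ ≤ c := by
  rw [Matrix.linfty_opNorm_def]
  have : (Finset.univ : Finset m).sup (fun i => ∑ j, ‖M i j‖₊) ≤ ⟨c, hc⟩ := by
    apply Finset.sup_le
    intro i _
    exact NNReal.coe_le_coe.mp (by rw [rowsum_eq]; exact h i)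
  exact_mod_cast this

lemma matInfNorm_le_norm {m p : Type*} [Fintype m] [Fintype p] (M : Matrix m p ℝ) :
    matInfNorm M ≤ ‖M‖ := by
  rcases isEmpty_or_nonempty m with hm | hm
  · rw [matInfNorm, Real.iSup_of_isEmpty]
    exact norm_nonneg M
  · apply ciSup_le
    intro i
    rw [Matrix.linfty_opNorm_def, ← rowsum_eq]
    have := Finset.le_sup (f := fun i => ∑ j, ‖M i j‖₊) (Finset.mem_univ i)
    exact_mod_cast this

set_option maxHeartbeats 1000000 in
/-- restricted-dictionary IRR. `S` is a set of `k`-cliques with pairwise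
overlaps at most `r`, `Ā` the corresponding submatrix of `R^{j,k}`, `T ⊆ S` nonempty,
`T^c = S \ T`. If `r ≤ (1/(|T|(1+√|T|)))^(1/j) · k`, then `Ā_T^*Ā_T` is invertible and
the irrepresentable condition holds. -/
theorem stmt13 (n j k r : ℕ) (hj : 2 ≤ j) (hjk : j < k) (hk : k ≤ n)
    (S : Finset {τ : Finset (Fin n) // τ.card = k})
    (hS : ∀ σ₁ ∈ S, ∀ σ₂ ∈ S, σ₁ ≠ σ₂ → (σ₁.1 ∩ σ₂.1).card ≤ r)
    (T : Finset {τ : Finset (Fin n) // τ.card = k}) (hTS : T ⊆ S) (hTne : T.Nonempty)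
    (hr : (r : ℝ) ≤
      (1 / ((T.card : ℝ) * (1 + Real.sqrt (T.card : ℝ)))) ^ ((1 : ℝ) / (j : ℝ)) * (k : ℝ)) :
    IsUnit ((colSub (radon n j k) T)ᵀ * colSub (radon n j k) T) ∧
    matInfNorm ((colSub (radon n j k) (S \ T))ᵀ * colSub (radon n j k) T *
      (((colSub (radon n j k) T)ᵀ * colSub (radon n j k) T)⁻¹)) < 1 := by
  classical
  have hjk' : j ≤ k := hjk.le
  have hCpos : (0:ℝ) < (k.choose j : ℝ) := by exact_mod_cast Nat.choose_pos hjk'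
  have hk0 : 0 < k := lt_of_le_of_lt (Nat.zero_le j) hjk
  have hkR : (0:ℝ) < (k:ℝ) := by exact_mod_cast hk0
  have hj0 : j ≠ 0 := by omega
  have ht1 : 1 ≤ T.card := hTne.card_pos
  set t : ℝ := (T.card : ℝ) with hts
  have htR : (1:ℝ) ≤ t := by rw [hts]; exact_mod_cast ht1
  set s : ℝ := Real.sqrt t with hss
  have hs1 : (1:ℝ) ≤ s := by
    rw [hss, ← Real.sqrt_one]
    exact Real.sqrt_le_sqrt htR
  set x : ℝ := 1 / (t * (1 + s)) with hx
  have hden : (0:ℝ) < t * (1 + s) := by nlinarith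
  have hx0 : (0:ℝ) < x := by rw [hx]; positivity
  have hx1 : x < 1 := by
    rw [hx, div_lt_one hden]; nlinarith
  have hxx : x * (t * (1 + s)) = 1 := by
    rw [hx]; field_simp
  -- `r ≤ k`
  have hxr : x ^ ((1:ℝ)/(j:ℝ)) ≤ 1 :=
    Real.rpow_le_one hx0.le hx1.le (by positivity)
  have hrk : (r:ℝ) ≤ k := le_trans hr (by nlinarith)
  have hrkN : r ≤ k := by exact_mod_cast hrk
  -- `ε ≤ x`
  have hpow : ((r:ℝ)/k)^j ≤ x := by
    have h1 : (r:ℝ)/k ≤ x ^ ((1:ℝ)/(j:ℝ)) := by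
      rw [div_le_iff₀ hkR]; exact hr
    have h2 : ((r:ℝ)/k)^j ≤ (x ^ ((1:ℝ)/(j:ℝ)))^j :=
      pow_le_pow_left₀ (by positivity) h1 j
    have h3 : (x ^ ((1:ℝ)/(j:ℝ)))^j = x := by
      rw [← Real.rpow_natCast (x ^ ((1:ℝ)/(j:ℝ))) j, ← Real.rpow_mul hx0.le,
        one_div_mul_cancel (by exact_mod_cast hj0), Real.rpow_one]
    rw [h3] at h2; exact h2
  have hepsx : ((r.choose j : ℝ))/(k.choose j : ℝ) ≤ x :=
    le_trans (choose_ratio r k j hrkN hk0 hjk') hpow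
  -- entry bounds
  have hbound : ∀ (a b : {τ : Finset (Fin n) // τ.card = k}), a ∈ S → b ∈ S → a ≠ b →
      (0:ℝ) ≤ ((a.1 ∩ b.1).card.choose j : ℝ) / (k.choose j : ℝ) ∧
      ((a.1 ∩ b.1).card.choose j : ℝ) / (k.choose j : ℝ) ≤ x := by
    intro a b ha hb hab
    constructor
    · positivity
    · refine le_trans ?_ hepsx
      gcongr
      exact_mod_cast hS a ha b hb hab
  haveI : Nonempty {y // y ∈ T} := ⟨⟨hTne.choose, hTne.choose_spec⟩⟩
  haveI : CompleteSpace (Matrix {y // y ∈ T} {y // y ∈ T} ℝ) := FiniteDimensional.complete ℝ _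
  set G := (colSub (radon n j k) T)ᵀ * colSub (radon n j k) T with hG
  set B := (colSub (radon n j k) (S \ T))ᵀ * colSub (radon n j k) T with hB
  have hGdiag : ∀ a : {y // y ∈ T}, G a a = 1 := by
    intro a
    rw [hG, gram_entry n j k hjk', Finset.inter_self, a.1.2, div_self hCpos.ne']
  set E := G - 1 with hE
  -- norm of E
  have hoff : ∀ a b : {y // y ∈ T}, b ≠ a → |E a b| ≤ x := by
    intro a b hba
    have hab : a.1 ≠ b.1 := fun h => hba (Subtype.ext h.symm)
    have hb := hbound a.1 b.1 (hTS a.2) (hTS b.2) hab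
    rw [hE, Matrix.sub_apply, Matrix.one_apply_ne (fun h => hba h.symm), sub_zero, hG,
      gram_entry n j k hjk']
    rw [abs_of_nonneg hb.1]
    exact hb.2
  have hEnorm : ‖E‖ ≤ (t - 1) * x := by
    apply norm_le_of_rowsum _ (by nlinarith)
    intro a
    have hdiag : |E a a| = 0 := by
      rw [hE, Matrix.sub_apply, Matrix.one_apply_eq, hGdiag, sub_self, abs_zero]
    calc ∑ b, |E a b| = ∑ b ∈ Finset.univ.erase a, |E a b| + |E a a| :=
          (Finset.sum_erase_add _ _ (Finset.mem_univ a)).symm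
      _ = ∑ b ∈ Finset.univ.erase a, |E a b| := by rw [hdiag, add_zero]
      _ ≤ ∑ _b ∈ Finset.univ.erase a, x :=
          Finset.sum_le_sum fun b hb => hoff a b (Finset.ne_of_mem_erase hb)
      _ = ((Finset.univ.erase a).card : ℝ) * x := by rw [Finset.sum_const, nsmul_eq_mul]
      _ = (t - 1) * x := by
          rw [Finset.card_erase_of_mem (Finset.mem_univ a), Finset.card_univ, Fintype.card_coe]
          congr 1
          rw [hts, Nat.cast_sub ht1, Nat.cast_one]
  have htx1 : (t - 1) * x < 1 := by nlinarith
  have hElt : ‖E‖ < 1 := lt_of_le_of_lt hEnorm htx1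
  have hnegE : ‖-E‖ < 1 := by rwa [norm_neg]
  set u : (Matrix {y // y ∈ T} {y // y ∈ T} ℝ)ˣ := Units.oneSub (-E) hnegE with hu
  have huv : (u : Matrix {y // y ∈ T} {y // y ∈ T} ℝ) = G := by
    rw [hu]
    show 1 - -E = G
    rw [hE]; abel
  have hunit : IsUnit G := huv ▸ u.isUnit
  refine ⟨hunit, ?_⟩
  -- inverse norm bound
  have hGinv : G⁻¹ = (↑u⁻¹ : Matrix {y // y ∈ T} {y // y ∈ T} ℝ) := by
    rw [Matrix.nonsing_inv_eq_ringInverse, ← huv, Ring.inverse_unit]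
  have hnorm1 : ‖(1 : Matrix {y // y ∈ T} {y // y ∈ T} ℝ)‖ ≤ 1 := by
    apply norm_le_of_rowsum _ zero_le_one
    intro a
    have : ∀ b, |(1 : Matrix {y // y ∈ T} {y // y ∈ T} ℝ) a b| = if a = b then (1:ℝ) else 0 := by
      intro b; rw [Matrix.one_apply]; split <;> simp
    rw [Finset.sum_congr rfl (fun b _ => this b), Finset.sum_ite_eq]
    simp
  have hinvnorm : ‖G⁻¹‖ ≤ (1 - ‖E‖)⁻¹ := by
    rw [hGinv]
    have heq : (↑u⁻¹ : Matrix {y // y ∈ T} {y // y ∈ T} ℝ) = ∑' m : ℕ, (-E)^m := rfl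
    rw [heq]
    have hts2 := tsum_geometric_le_of_norm_lt_one (-E) hnegE
    rw [norm_neg] at hts2
    exact le_trans hts2 (add_le_of_nonpos_left (sub_nonpos.mpr hnorm1))
  -- B norm bound
  have hBnorm : ‖B‖ ≤ t * x := by
    apply norm_le_of_rowsum _ (by nlinarith)
    intro a
    have key : ∀ b : {y // y ∈ T}, |B a b| ≤ x := by
      intro b
      have haS : a.1 ∈ S := (Finset.mem_sdiff.mp a.2).1
      have haT : a.1 ∉ T := (Finset.mem_sdiff.mp a.2).2
      have hab : a.1 ≠ b.1 := fun h => haT (h ▸ b.2)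
      have hb := hbound a.1 b.1 haS (hTS b.2) hab
      rw [hB, gram_entry n j k hjk']
      rw [abs_of_nonneg hb.1]
      exact hb.2
    calc ∑ b, |B a b| ≤ ∑ _b : {y // y ∈ T}, x := Finset.sum_le_sum fun b _ => key b
      _ = ((Finset.univ : Finset {y // y ∈ T}).card : ℝ) * x := by
          rw [Finset.sum_const, nsmul_eq_mul]
      _ = t * x := by rw [Finset.card_univ, Fintype.card_coe]
  -- combine
  have h1 : matInfNorm (B * G⁻¹) ≤ ‖B * G⁻¹‖ := matInfNorm_le_norm _
  have h2 : ‖B * G⁻¹‖ ≤ ‖B‖ * ‖G⁻¹‖ := Matrix.linfty_opNorm_mul _ _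
  have hd2 : (0:ℝ) < 1 - (t - 1) * x := by linarith
  have hd1 : (0:ℝ) < 1 - ‖E‖ := by linarith
  have h3 : (1 - ‖E‖)⁻¹ ≤ (1 - (t - 1) * x)⁻¹ := by
    apply inv_anti₀ hd2
    linarith
  have h4 : ‖B‖ * ‖G⁻¹‖ ≤ (t * x) * (1 - (t - 1) * x)⁻¹ :=
    mul_le_mul hBnorm (le_trans hinvnorm h3) (norm_nonneg _) (by nlinarith)
  have h5 : (t * x) * (1 - (t - 1) * x)⁻¹ < 1 := by
    rw [← div_eq_mul_inv, div_lt_one hd2]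
    nlinarith
  linarith
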